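/- The trilinear functional Ψ(f₀,f₁,f₂) = (1/2πi) τ(f₀(∂₁f₁)(∂₂f₂) − f₀(∂₂f₁)(∂₁f₂)) on the noncommutative cylinder is cyclic: Ψ(f₂,f₀,f₁) = Ψ(f₀,f₁,f₂). -/

import Mathlib

open MeasureTheory

/-- The twisted product `(f • g)_n(u) = ∑_k f_k(u) g_{n-k}(u + kℏ)`. -/
noncomputable def ncProd (ℏ : ℝ) (f g : ℤ → ℝ → ℂ) : ℤ → ℝ → ℂ :=
  fun n u => ∑' k : ℤ, f k u * g (n - k) (u + k * ℏ)

/-- `∂₁ f = ∑_n f_n'(u) W^n`. -/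
noncomputable def d1 (f : ℤ → ℝ → ℂ) : ℤ → ℝ → ℂ := fun n u => deriv (f n) u

/-- `∂₂ f = 2πi ∑_n n f_n(u) W^n`. -/
noncomputable def d2 (f : ℤ → ℝ → ℂ) : ℤ → ℝ → ℂ :=
  fun n u => 2 * Real.pi * Complex.I * n * f n u

/-- The trace `τ(f) = ∫_ℝ f₀(u) du`. -/
noncomputable def tau (f : ℤ → ℝ → ℂ) : ℂ := ∫ u : ℝ, f 0 u

/-- `Ψ(f₀,f₁,f₂) = (1/2πi) τ(f₀(∂₁f₁)(∂₂f₂) − f₀(∂₂f₁)(∂₁f₂))`. -/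
noncomputable def Psi (ℏ : ℝ) (a b c : ℤ → ℝ → ℂ) : ℂ :=
  (2 * Real.pi * Complex.I)⁻¹ *
    (tau (ncProd ℏ (ncProd ℏ a (d1 b)) (d2 c)) -
      tau (ncProd ℏ (ncProd ℏ a (d2 b)) (d1 c)))

namespace PsiAux3

open Filter


noncomputable def term (ℏ : ℝ) (F G H : ℤ → ℝ → ℂ) (p : ℤ × ℤ) : ℂ :=
  ∫ u : ℝ, F p.1 u * G p.2 (u + ((p.1 : ℤ) : ℝ) * ℏ)
    * H (-(p.1 + p.2)) (u + (((p.1 + p.2 : ℤ)) : ℝ) * ℏ)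

noncomputable def Sig (ℏ : ℝ) (F G H : ℤ → ℝ → ℂ) : ℂ := ∑' p : ℤ × ℤ, term ℏ F G H p

lemma term_cyclic (ℏ : ℝ) (F G H : ℤ → ℝ → ℂ) (j l : ℤ) :
    term ℏ F G H (j, l) = term ℏ G H F (l, -(j + l)) := by
  have hΦ : (fun u : ℝ => F j u * G l (u + ((j : ℤ) : ℝ) * ℏ)
        * H (-(j + l)) (u + (((j + l : ℤ)) : ℝ) * ℏ))
      = fun u : ℝ => (fun v : ℝ => G l v * H (-(j + l)) (v + ((l : ℤ) : ℝ) * ℏ)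
          * F (-(l + -(j + l))) (v + (((l + -(j + l) : ℤ)) : ℝ) * ℏ)) (u + ((j : ℤ) : ℝ) * ℏ) := by
    funext u
    simp only [show -(l + -(j + l)) = j by ring]
    push_cast
    ring_nf
  have h2 := integral_add_right_eq_self (μ := volume)
    (fun v : ℝ => G l v * H (-(j + l)) (v + ((l : ℤ) : ℝ) * ℏ)
      * F (-(l + -(j + l))) (v + (((l + -(j + l) : ℤ)) : ℝ) * ℏ)) (((j : ℤ) : ℝ) * ℏ)
  show (∫ u : ℝ, F j u * G l (u + ((j : ℤ) : ℝ) * ℏ)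
      * H (-(j + l)) (u + (((j + l : ℤ)) : ℝ) * ℏ)) = _
  rw [hΦ]
  exact h2

def cyc : ℤ × ℤ ≃ ℤ × ℤ where
  toFun p := (p.2, -(p.1 + p.2))
  invFun q := (-(q.1 + q.2), q.1)
  left_inv p := by simp
  right_inv q := by simp

lemma Sig_cyclic (ℏ : ℝ) (F G H : ℤ → ℝ → ℂ) :
    Sig ℏ F G H = Sig ℏ G H F := by
  unfold Sig
  rw [← Equiv.tsum_eq cyc (term ℏ G H F)]
  refine tsum_congr fun p => ?_
  have := term_cyclic ℏ F G H p.1 p.2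
  simpa [cyc] using this

noncomputable def cf (F : ℤ → SchwartzMap ℝ ℂ) : ℤ → ℝ → ℂ := fun n => ⇑(F n)

noncomputable def D1 (F : ℤ → SchwartzMap ℝ ℂ) : ℤ → SchwartzMap ℝ ℂ :=
  fun n => SchwartzMap.derivCLM ℂ ℂ (F n)

noncomputable def D2 (F : ℤ → SchwartzMap ℝ ℂ) : ℤ → SchwartzMap ℝ ℂ :=
  fun n => ((2 * Real.pi * Complex.I * n : ℂ)) • F n

lemma supp_D1 (F : ℤ → SchwartzMap ℝ ℂ) :
    Function.support (D1 F) ⊆ Function.support F := by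
  intro n hn
  simp only [Function.mem_support] at *
  intro h
  exact hn (by rw [D1, h, map_zero])

lemma supp_D2 (F : ℤ → SchwartzMap ℝ ℂ) :
    Function.support (D2 F) ⊆ Function.support F := by
  intro n hn
  simp only [Function.mem_support] at *
  intro h
  exact hn (by rw [D2, h, smul_zero])

lemma D1_D2 (F : ℤ → SchwartzMap ℝ ℂ) : D1 (D2 F) = D2 (D1 F) := by
  funext n
  simp only [D1, D2, _root_.map_smul]

lemma summable_term (ℏ : ℝ) (F G H : ℤ → SchwartzMap ℝ ℂ)
    (hF : (Function.support F).Finite) (hG : (Function.support G).Finite) :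
    Summable (term ℏ (cf F) (cf G) (cf H)) := by
  apply summable_of_ne_finset_zero (s := hF.toFinset ×ˢ hG.toFinset)
  intro p hp
  rw [Finset.mem_product] at hp
  rcases not_and_or.mp hp with h | h
  · have hz : F p.1 = 0 := by
      by_contra hne
      exact h (hF.mem_toFinset.mpr hne)
    simp [term, cf, hz]
  · have hz : G p.2 = 0 := by
      by_contra hne
      exact h (hG.mem_toFinset.mpr hne)
    simp [term, cf, hz]


lemma schwartz_bound (f : SchwartzMap ℝ ℂ) : ∃ C : ℝ, ∀ x, ‖f x‖ ≤ C :=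
  ⟨‖f.toBoundedContinuousFunction‖,
    fun x => f.toBoundedContinuousFunction.norm_coe_le_norm x⟩

lemma integrable3 (f g h : SchwartzMap ℝ ℂ) (s t : ℝ) :
    Integrable (fun u : ℝ => f u * g (u + s) * h (u + t)) := by
  have heq : (fun u : ℝ => f u * g (u + s) * h (u + t))
      = fun u : ℝ => (g (u + s) * h (u + t)) * f u := by
    funext u; ring
  rw [heq]
  obtain ⟨Cg, hCg⟩ := schwartz_bound g
  obtain ⟨Ch, hCh⟩ := schwartz_bound h
  refine Integrable.bdd_mul (c := Cg * Ch) f.integrable ?_ ?_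
  · exact ((g.continuous.comp (continuous_id.add continuous_const)).mul
      (h.continuous.comp (continuous_id.add continuous_const))).aestronglyMeasurable
  · refine Filter.Eventually.of_forall (fun x => ?_)
    rw [norm_mul]
    have h0 : (0:ℝ) ≤ Ch := le_trans (norm_nonneg _) (hCh 0)
    exact mul_le_mul (hCg _) (hCh _) (norm_nonneg _) (le_trans (norm_nonneg _) (hCg 0))

lemma tendsto_zero_cocompact (f : SchwartzMap ℝ ℂ) :
    Tendsto (fun x : ℝ => f x) (Filter.cocompact ℝ) (nhds 0) :=
  f.toZeroAtInfty.zero_at_infty'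

lemma prod3_tendsto (f g h : SchwartzMap ℝ ℂ) (s t : ℝ) (l : Filter ℝ)
    (hl : l ≤ Filter.cocompact ℝ) :
    Tendsto (fun u : ℝ => f u * g (u + s) * h (u + t)) l (nhds 0) := by
  obtain ⟨Cg, hCg⟩ := schwartz_bound g
  obtain ⟨Ch, hCh⟩ := schwartz_bound h
  have hf : Tendsto (fun x : ℝ => ‖f x‖) l (nhds 0) := by
    have := ((tendsto_zero_cocompact f).mono_left hl).norm
    simpa using this
  have hprod : Tendsto (fun u : ℝ => ‖f u‖ * (Cg * Ch)) l (nhds 0) := by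
    simpa using hf.mul_const (Cg * Ch)
  refine squeeze_zero_norm (fun u => ?_) hprod
  have h0g : (0:ℝ) ≤ Cg := le_trans (norm_nonneg _) (hCg 0)
  calc ‖f u * g (u + s) * h (u + t)‖ = ‖f u‖ * ‖g (u+s)‖ * ‖h (u+t)‖ := by
        rw [norm_mul, norm_mul]
    _ ≤ ‖f u‖ * Cg * Ch := by
        refine mul_le_mul (mul_le_mul le_rfl (hCg _) (norm_nonneg _) (norm_nonneg _))
          (hCh _) (norm_nonneg _) (by positivity)
    _ = ‖f u‖ * (Cg * Ch) := by ring

lemma integral_deriv_eq_zero' (F F' : ℝ → ℂ) (hF : ∀ x, HasDerivAt F (F' x) x)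
    (hF' : Integrable F') (htop : Tendsto F atTop (nhds 0))
    (hbot : Tendsto F atBot (nhds 0)) : ∫ x : ℝ, F' x = 0 := by
  have h1 : ∫ x in Set.Ioi (0:ℝ), F' x = 0 - F 0 :=
    integral_Ioi_of_hasDerivAt_of_tendsto' (fun x _ => hF x) hF'.integrableOn htop
  have h2 : ∫ x in Set.Iic (0:ℝ), F' x = F 0 - 0 :=
    integral_Iic_of_hasDerivAt_of_tendsto' (fun x _ => hF x) hF'.integrableOn hbot
  rw [← intervalIntegral.integral_Iic_add_Ioi (b := (0:ℝ)) hF'.integrableOn hF'.integrableOn, h1, h2]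
  ring


lemma sderiv (f : SchwartzMap ℝ ℂ) (x : ℝ) :
    HasDerivAt f (SchwartzMap.derivCLM ℂ ℂ f x) x := by
  rw [SchwartzMap.derivCLM_apply]
  exact ((f.smooth ⊤).differentiable (by norm_num)).differentiableAt.hasDerivAt

lemma sderiv_shift (f : SchwartzMap ℝ ℂ) (s x : ℝ) :
    HasDerivAt (fun u : ℝ => f (u + s)) (SchwartzMap.derivCLM ℂ ℂ f (x + s)) x :=
  (sderiv f (x + s)).comp_add_const x s

lemma prod3_hasDerivAt (f g h : SchwartzMap ℝ ℂ) (s t : ℝ) (u : ℝ) :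
    HasDerivAt (fun u : ℝ => f u * g (u + s) * h (u + t))
      (SchwartzMap.derivCLM ℂ ℂ f u * g (u + s) * h (u + t)
        + f u * SchwartzMap.derivCLM ℂ ℂ g (u + s) * h (u + t)
        + f u * g (u + s) * SchwartzMap.derivCLM ℂ ℂ h (u + t)) u := by
  have := ((sderiv f u).mul (sderiv_shift g s u)).mul (sderiv_shift h t u)
  refine this.congr_deriv ?_
  simp only [Pi.mul_apply]
  ring

lemma ibp (f g h : SchwartzMap ℝ ℂ) (s t : ℝ) :
    (∫ u : ℝ, SchwartzMap.derivCLM ℂ ℂ f u * g (u + s) * h (u + t))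
      + (∫ u : ℝ, f u * SchwartzMap.derivCLM ℂ ℂ g (u + s) * h (u + t))
      + (∫ u : ℝ, f u * g (u + s) * SchwartzMap.derivCLM ℂ ℂ h (u + t)) = 0 := by
  have i1 : Integrable (fun u : ℝ => SchwartzMap.derivCLM ℂ ℂ f u * g (u + s) * h (u + t)) :=
    integrable3 (SchwartzMap.derivCLM ℂ ℂ f) g h s t
  have i2 : Integrable (fun u : ℝ => f u * SchwartzMap.derivCLM ℂ ℂ g (u + s) * h (u + t)) :=
    integrable3 f (SchwartzMap.derivCLM ℂ ℂ g) h s t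
  have i3 : Integrable (fun u : ℝ => f u * g (u + s) * SchwartzMap.derivCLM ℂ ℂ h (u + t)) :=
    integrable3 f g (SchwartzMap.derivCLM ℂ ℂ h) s t
  have h0 := integral_deriv_eq_zero' _ _ (prod3_hasDerivAt f g h s t) ((i1.add i2).add i3)
    (prod3_tendsto f g h s t atTop (by rw [cocompact_eq_atBot_atTop]; exact le_sup_right))
    (prod3_tendsto f g h s t atBot (by rw [cocompact_eq_atBot_atTop]; exact le_sup_left))
  have i12 : Integrable (fun u : ℝ => SchwartzMap.derivCLM ℂ ℂ f u * g (u + s) * h (u + t)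
      + f u * SchwartzMap.derivCLM ℂ ℂ g (u + s) * h (u + t)) := i1.add i2
  rw [integral_add i12 i3, integral_add i1 i2] at h0
  exact h0


lemma Sig_ibp (ℏ : ℝ) (F G H : ℤ → SchwartzMap ℝ ℂ)
    (hF : (Function.support F).Finite) (hG : (Function.support G).Finite) :
    Sig ℏ (cf (D1 F)) (cf G) (cf H) + Sig ℏ (cf F) (cf (D1 G)) (cf H)
      + Sig ℏ (cf F) (cf G) (cf (D1 H)) = 0 := by
  have s1 : Summable (term ℏ (cf (D1 F)) (cf G) (cf H)) :=
    summable_term ℏ (D1 F) G H (hF.subset (supp_D1 F)) hG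
  have s2 : Summable (term ℏ (cf F) (cf (D1 G)) (cf H)) :=
    summable_term ℏ F (D1 G) H hF (hG.subset (supp_D1 G))
  have s3 : Summable (term ℏ (cf F) (cf G) (cf (D1 H))) :=
    summable_term ℏ F G (D1 H) hF hG
  have hp : ∀ p : ℤ × ℤ, term ℏ (cf (D1 F)) (cf G) (cf H) p
      + term ℏ (cf F) (cf (D1 G)) (cf H) p + term ℏ (cf F) (cf G) (cf (D1 H)) p = 0 :=
    fun p => ibp (F p.1) (G p.2) (H (-(p.1 + p.2)))
      (((p.1 : ℤ) : ℝ) * ℏ) ((((p.1 + p.2 : ℤ)) : ℝ) * ℏ)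
  unfold Sig
  rw [← Summable.tsum_add s1 s2, ← Summable.tsum_add (s1.add s2) s3]
  exact (tsum_congr hp).trans tsum_zero

lemma term_D2_left (ℏ : ℝ) (F G H : ℤ → SchwartzMap ℝ ℂ) (p : ℤ × ℤ) :
    term ℏ (cf (D2 F)) (cf G) (cf H) p
      = (2 * Real.pi * Complex.I * p.1) * term ℏ (cf F) (cf G) (cf H) p := by
  unfold term cf D2
  rw [← integral_const_mul]
  congr 1
  funext u
  simp only [SchwartzMap.smul_apply, smul_eq_mul]
  ring

lemma term_D2_mid (ℏ : ℝ) (F G H : ℤ → SchwartzMap ℝ ℂ) (p : ℤ × ℤ) :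
    term ℏ (cf F) (cf (D2 G)) (cf H) p
      = (2 * Real.pi * Complex.I * p.2) * term ℏ (cf F) (cf G) (cf H) p := by
  unfold term cf D2
  rw [← integral_const_mul]
  congr 1
  funext u
  simp only [SchwartzMap.smul_apply, smul_eq_mul]
  ring

lemma term_D2_right (ℏ : ℝ) (F G H : ℤ → SchwartzMap ℝ ℂ) (p : ℤ × ℤ) :
    term ℏ (cf F) (cf G) (cf (D2 H)) p
      = (2 * Real.pi * Complex.I * (-(p.1 + p.2) : ℤ)) * term ℏ (cf F) (cf G) (cf H) p := by
  unfold term cf D2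
  rw [← integral_const_mul]
  congr 1
  funext u
  simp only [SchwartzMap.smul_apply, smul_eq_mul]
  ring

lemma Sig_d2 (ℏ : ℝ) (F G H : ℤ → SchwartzMap ℝ ℂ)
    (hF : (Function.support F).Finite) (hG : (Function.support G).Finite) :
    Sig ℏ (cf (D2 F)) (cf G) (cf H) + Sig ℏ (cf F) (cf (D2 G)) (cf H)
      + Sig ℏ (cf F) (cf G) (cf (D2 H)) = 0 := by
  have s1 : Summable (term ℏ (cf (D2 F)) (cf G) (cf H)) :=
    summable_term ℏ (D2 F) G H (hF.subset (supp_D2 F)) hG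
  have s2 : Summable (term ℏ (cf F) (cf (D2 G)) (cf H)) :=
    summable_term ℏ F (D2 G) H hF (hG.subset (supp_D2 G))
  have s3 : Summable (term ℏ (cf F) (cf G) (cf (D2 H))) :=
    summable_term ℏ F G (D2 H) hF hG
  have hp : ∀ p : ℤ × ℤ, term ℏ (cf (D2 F)) (cf G) (cf H) p
      + term ℏ (cf F) (cf (D2 G)) (cf H) p + term ℏ (cf F) (cf G) (cf (D2 H)) p = 0 := by
    intro p
    rw [term_D2_left, term_D2_mid, term_D2_right]
    push_cast
    ring
  unfold Sig
  rw [← Summable.tsum_add s1 s2, ← Summable.tsum_add (s1.add s2) s3]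
  exact (tsum_congr hp).trans tsum_zero

def idx : ℤ × ℤ ≃ ℤ × ℤ where
  toFun p := (p.1 + p.2, p.1)
  invFun q := (q.2, q.1 - q.2)
  left_inv p := by simp
  right_inv q := by simp

lemma tau_expand (ℏ : ℝ) (F G H : ℤ → SchwartzMap ℝ ℂ)
    (hF : (Function.support F).Finite) (hH : (Function.support H).Finite) :
    tau (ncProd ℏ (ncProd ℏ (cf F) (cf G)) (cf H)) = Sig ℏ (cf F) (cf G) (cf H) := by
  classical
  set SF := hF.toFinset with hSF
  set K : Finset ℤ := hH.toFinset.image (fun x => -x) with hK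
  have hKmem : ∀ k : ℤ, k ∉ K → H (-k) = 0 := by
    intro k hk
    by_contra hne
    apply hk
    rw [hK]
    refine Finset.mem_image.mpr ⟨-k, hH.mem_toFinset.mpr ?_, by ring⟩
    simpa [Function.mem_support] using hne
  have hFmem : ∀ j : ℤ, j ∉ SF → F j = 0 := by
    intro j hj
    by_contra hne
    exact hj (hF.mem_toFinset.mpr hne)
  have step1 : ∀ u : ℝ, ncProd ℏ (ncProd ℏ (cf F) (cf G)) (cf H) 0 u
      = ∑ k ∈ K, ∑ j ∈ SF, cf F j u * cf G (k - j) (u + ((j : ℤ) : ℝ) * ℏ)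
          * cf H (0 - k) (u + ((k : ℤ) : ℝ) * ℏ) := by
    intro u
    show (∑' k : ℤ, (∑' j : ℤ, cf F j u * cf G (k - j) (u + ((j : ℤ) : ℝ) * ℏ))
        * cf H (0 - k) (u + ((k : ℤ) : ℝ) * ℏ)) = _
    rw [tsum_eq_sum (s := K) (fun k hk => by simp [cf, hKmem k hk])]
    refine Finset.sum_congr rfl fun k hk => ?_
    rw [tsum_eq_sum (s := SF) (fun j hj => by simp [cf, hFmem j hj]), Finset.sum_mul]
  calc tau (ncProd ℏ (ncProd ℏ (cf F) (cf G)) (cf H))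
      = ∫ u : ℝ, ∑ k ∈ K, ∑ j ∈ SF, cf F j u * cf G (k - j) (u + ((j : ℤ) : ℝ) * ℏ)
          * cf H (0 - k) (u + ((k : ℤ) : ℝ) * ℏ) :=
        integral_congr_ae (Filter.Eventually.of_forall step1)
    _ = ∑ k ∈ K, ∑ j ∈ SF, ∫ u : ℝ, cf F j u * cf G (k - j) (u + ((j : ℤ) : ℝ) * ℏ)
          * cf H (0 - k) (u + ((k : ℤ) : ℝ) * ℏ) := by
        rw [integral_finset_sum]
        · refine Finset.sum_congr rfl fun k hk => ?_
          rw [integral_finset_sum]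
          intro j hj
          exact integrable3 (F j) (G (k - j)) (H (0 - k)) _ _
        · intro k hk
          exact integrable_finset_sum _
            (fun j hj => integrable3 (F j) (G (k - j)) (H (0 - k)) _ _)
    _ = ∑ q ∈ K ×ˢ SF, (fun q : ℤ × ℤ => ∫ u : ℝ, cf F q.2 u
          * cf G (q.1 - q.2) (u + ((q.2 : ℤ) : ℝ) * ℏ)
          * cf H (0 - q.1) (u + ((q.1 : ℤ) : ℝ) * ℏ)) q := by
        rw [Finset.sum_product]
    _ = ∑' q : ℤ × ℤ, (fun q : ℤ × ℤ => ∫ u : ℝ, cf F q.2 u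
          * cf G (q.1 - q.2) (u + ((q.2 : ℤ) : ℝ) * ℏ)
          * cf H (0 - q.1) (u + ((q.1 : ℤ) : ℝ) * ℏ)) q := by
        refine (tsum_eq_sum fun q hq => ?_).symm
        rw [Finset.mem_product] at hq
        rcases not_and_or.mp hq with h | h
        · simp [cf, hKmem q.1 h]
        · simp [cf, hFmem q.2 h]
    _ = ∑' p : ℤ × ℤ, (fun q : ℤ × ℤ => ∫ u : ℝ, cf F q.2 u
          * cf G (q.1 - q.2) (u + ((q.2 : ℤ) : ℝ) * ℏ)
          * cf H (0 - q.1) (u + ((q.1 : ℤ) : ℝ) * ℏ)) (idx p) :=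
        (Equiv.tsum_eq idx _).symm
    _ = Sig ℏ (cf F) (cf G) (cf H) := by
        refine tsum_congr fun p => ?_
        show (∫ u : ℝ, cf F p.1 u * cf G (p.1 + p.2 - p.1) (u + ((p.1 : ℤ) : ℝ) * ℏ)
            * cf H (0 - (p.1 + p.2)) (u + (((p.1 + p.2 : ℤ)) : ℝ) * ℏ)) = _
        rw [show p.1 + p.2 - p.1 = p.2 by ring, show (0 : ℤ) - (p.1 + p.2) = -(p.1 + p.2) by ring]
        rfl


lemma cf_D1 (F : ℤ → SchwartzMap ℝ ℂ) : d1 (cf F) = cf (D1 F) := by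
  funext n u
  simp [d1, cf, D1, SchwartzMap.derivCLM_apply]

lemma cf_D2 (F : ℤ → SchwartzMap ℝ ℂ) : d2 (cf F) = cf (D2 F) := by
  funext n u
  simp only [d2, cf, D2, SchwartzMap.smul_apply, smul_eq_mul]

end PsiAux3

/-- `Ψ` is cyclic: `Ψ(f₂,f₀,f₁) = Ψ(f₀,f₁,f₂)`. -/
theorem Psi_cyclic (ℏ : ℝ) (f0 f1 f2 : ℤ → SchwartzMap ℝ ℂ)
    (h0 : (Function.support f0).Finite) (h1 : (Function.support f1).Finite)
    (h2 : (Function.support f2).Finite) :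
    Psi ℏ (fun n => ⇑(f2 n)) (fun n => ⇑(f0 n)) (fun n => ⇑(f1 n)) =
      Psi ℏ (fun n => ⇑(f0 n)) (fun n => ⇑(f1 n)) (fun n => ⇑(f2 n)) := by
  open PsiAux3 in
  show Psi ℏ (cf f2) (cf f0) (cf f1) = Psi ℏ (cf f0) (cf f1) (cf f2)
  unfold Psi
  rw [cf_D1 f0, cf_D2 f1, cf_D2 f0, cf_D1 f1, cf_D2 f2, cf_D1 f2]
  rw [tau_expand ℏ f2 (D1 f0) (D2 f1) h2 (h1.subset (supp_D2 f1)),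
    tau_expand ℏ f2 (D2 f0) (D1 f1) h2 (h1.subset (supp_D1 f1)),
    tau_expand ℏ f0 (D1 f1) (D2 f2) h0 (h2.subset (supp_D2 f2)),
    tau_expand ℏ f0 (D2 f1) (D1 f2) h0 (h2.subset (supp_D1 f2))]
  rw [Sig_cyclic ℏ (cf f2) (cf (D1 f0)) (cf (D2 f1)),
    Sig_cyclic ℏ (cf f2) (cf (D2 f0)) (cf (D1 f1))]
  have R1 := Sig_ibp ℏ f0 (D2 f1) f2 h0 (h1.subset (supp_D2 f1))
  have R2 := Sig_d2 ℏ f0 (D1 f1) f2 h0 (h1.subset (supp_D1 f1))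
  rw [D1_D2 f1] at R1
  linear_combination (2 * Real.pi * Complex.I)⁻¹ * R1
    - (2 * Real.pi * Complex.I)⁻¹ * R2
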